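/- Let r ≥ 2 be an integer and suppose q = r² and a = −2r (so a = −2√q). Then for every positive integer X, M(X) = (−r)^X − (−1)^X·(r + 1)·r^{X−1}·X; equivalently, M(X)/q^{X/2} = −(−1)^X·(1 + 1/√q)·X + (−1)^X. -/
import Mathlib


open Real Filter

/-- The coefficient sequence `c_N` with `c_0 = 1`, `c_1 = a - q - 1`,
`c_2 = a*c_1 - q*c_0 + q`, and `c_N = a*c_{N-1} - q*c_{N-2}` for `N ≥ 3`;
these are the Taylor coefficients at `u = 0` of `(1-u)(1-qu)/(1-au+qu²)`,
the reciprocal of the zeta function of an elliptic curve over `F_q` with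
Frobenius trace `a`. -/
def mertC (q a : ℤ) : ℕ → ℤ
  | 0 => 1
  | 1 => a - q - 1
  | 2 => a * (a - q - 1) - q * 1 + q
  | (N + 3) => a * mertC q a (N + 2) - q * mertC q a (N + 1)

/-- `M(X) = ∑_{N=0}^{X-1} c_N`, the Mertens summatory function of the
Möbius function of an elliptic curve over `F_q` with Frobenius trace `a`. -/
def mertM (q a : ℤ) (X : ℕ) : ℤ := ∑ N ∈ Finset.range X, mertC q a N

lemma mertC_form (r : ℤ) :
    ∀ n : ℕ, mertC (r ^ 2) (-(2 * r)) (n + 1) =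
      (-1) ^ (n + 1) * r ^ n * ((n : ℤ) + 1) * (r + 1) ^ 2
  | 0 => by simp [mertC]; ring
  | 1 => by simp [mertC]; ring
  | (n + 2) => by
      have h1 := mertC_form r n
      have h2 := mertC_form r (n + 1)
      show mertC (r ^ 2) (-(2 * r)) (n + 3) = _
      rw [mertC, h1, h2]
      push_cast
      ring

lemma mertM_form (r : ℤ) :
    ∀ n : ℕ, mertM (r ^ 2) (-(2 * r)) (n + 1) =
      (-r) ^ (n + 1) - (-1) ^ (n + 1) * (r + 1) * r ^ n * ((n : ℤ) + 1) := by
  intro n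
  induction n with
  | zero => simp [mertM, mertC]
  | succ n ih =>
      rw [mertM, Finset.sum_range_succ, ← mertM, ih, mertC_form r n]
      push_cast
      ring

theorem mertens_formula_double_zero_minus (r : ℤ) (hr : 2 ≤ r) (q a : ℤ)
    (hq : q = r ^ 2) (ha : a = -(2 * r)) :
    ∀ X : ℕ, 1 ≤ X →
      mertM q a X = (-r) ^ X - (-1) ^ X * (r + 1) * r ^ (X - 1) * (X : ℤ) ∧
      (mertM q a X : ℝ) / (q : ℝ) ^ ((X : ℝ) / 2) =
        -(-1 : ℝ) ^ X * (1 + 1 / Real.sqrt (q : ℝ)) * (X : ℝ) + (-1 : ℝ) ^ X := by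
  intro X hX
  obtain ⟨n, rfl⟩ : ∃ n, X = n + 1 := ⟨X - 1, (Nat.succ_pred_eq_of_pos hX).symm⟩
  subst hq ha
  have hint : mertM (r ^ 2) (-(2 * r)) (n + 1) =
      (-r) ^ (n + 1) - (-1) ^ (n + 1) * (r + 1) * r ^ ((n + 1) - 1) * ((n : ℤ) + 1) := by
    simpa using mertM_form r n
  have rpos : (0 : ℝ) < (r : ℝ) := by positivity
  have hrpow : ((r ^ 2 : ℤ) : ℝ) ^ (((n + 1 : ℕ) : ℝ) / 2) = (r : ℝ) ^ (n + 1 : ℕ) := by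
    push_cast
    rw [← Real.rpow_natCast (r : ℝ) 2, ← Real.rpow_mul rpos.le,
      ← Real.rpow_natCast (r : ℝ) (n + 1)]
    congr 1
    push_cast
    ring
  have hsqrt : Real.sqrt ((r ^ 2 : ℤ) : ℝ) = (r : ℝ) := by
    push_cast
    exact Real.sqrt_sq rpos.le
  refine ⟨by push_cast at hint ⊢; linarith [hint], ?_⟩
  rw [hrpow, hsqrt, hint]
  have hr0 : (r : ℝ) ≠ 0 := ne_of_gt rpos
  push_cast
  field_simp
  ring
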